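/- For a C¹ convex ϕ: [0,1] → ℝ̄, random variables with σ(h(X)) ⊆ σ(g(X)): E[d_ϕ(E[𝟙_{Y=c(X)} | g(X)], h(X)) | h(X)] ≥ d_ϕ(E[𝟙_{Y=c(X)} | h(X)], h(X)) almost surely. -/
import Mathlib


open MeasureTheory

lemma grad_ineq {ϕ Dϕ : ℝ → ℝ} (hϕconv : ConvexOn ℝ (Set.Icc 0 1) ϕ)
    (hDϕ : ∀ y, HasDerivAt ϕ (Dϕ y) y) {p q : ℝ}
    (hp : p ∈ Set.Icc (0:ℝ) 1) (hq : q ∈ Set.Icc (0:ℝ) 1) :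
    ϕ q + Dϕ q * (p - q) ≤ ϕ p := by
  rcases lt_trichotomy p q with hlt | heq | hgt
  · have hs := hϕconv.slope_le_of_hasDerivAt hp hq hlt (hDϕ q)
    rw [slope_def_field, div_le_iff₀ (by linarith)] at hs
    nlinarith
  · simp [heq]
  · have hs := hϕconv.le_slope_of_hasDerivAt hq hp hgt (hDϕ q)
    rw [slope_def_field, le_div_iff₀ (by linarith)] at hs
    nlinarith

/-- **Conditional Jensen step for 1-D Bregman divergences.** For a C¹ convex `ϕ : [0,1] → ℝ`,
with `σ(h(X)) ⊆ σ(g(X))` (both being measurable functions of the predictor output), almost surely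
`E[d_ϕ(E[𝟙_{Y=c(X)} | g(X)], h(X)) | h(X)] ≥ d_ϕ(E[𝟙_{Y=c(X)} | h(X)], h(X))`. -/
theorem conditional_jensen_bregman_1d
    {Ω : Type*} [m0 : MeasurableSpace Ω] (μ : Measure Ω) [IsProbabilityMeasure μ]
    {d k : ℕ}
    (X : Ω → (Fin d → ℝ)) (Y : Ω → Fin k) (hX : Measurable X) (hY : Measurable Y)
    (g : (Fin d → ℝ) → (Fin k → ℝ)) (hg : Measurable g)
    (hgs : ∀ x, g x ∈ stdSimplex ℝ (Fin k))
    (c : (Fin k → ℝ) → Fin k) (h : (Fin k → ℝ) → ℝ)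
    (hc : ∀ (z : Fin k → ℝ) (i : Fin k), z i ≤ z (c z)) (hh : ∀ z, h z = z (c z))
    (hcmeas : Measurable[MeasurableSpace.comap (fun ω => g (X ω)) inferInstance]
      (fun ω => c (g (X ω))))
    (hσ : MeasurableSpace.comap (fun ω => h (g (X ω))) inferInstance ≤
          MeasurableSpace.comap (fun ω => g (X ω)) inferInstance)
    (ϕ : ℝ → ℝ) (Dϕ : ℝ → ℝ)
    (hϕC1 : ContDiff ℝ 1 ϕ)
    (hϕconv : ConvexOn ℝ (Set.Icc 0 1) ϕ)
    (hDϕ : ∀ y, HasDerivAt ϕ (Dϕ y) y)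
    (dϕ : ℝ → ℝ → ℝ)
    (hdϕ : ∀ p q, dϕ p q = ϕ p - ϕ q - Dϕ q * (p - q)) :
    ∀ᵐ ω ∂μ,
      dϕ ((μ[(fun ω' => if Y ω' = c (g (X ω')) then (1 : ℝ) else 0) |
            MeasurableSpace.comap (fun ω' => h (g (X ω'))) inferInstance]) ω)
          (h (g (X ω)))
        ≤ (μ[(fun ω' =>
              dϕ ((μ[(fun ω'' => if Y ω'' = c (g (X ω'')) then (1 : ℝ) else 0) |
                    MeasurableSpace.comap (fun ω'' => g (X ω'')) inferInstance]) ω')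
                (h (g (X ω')))) |
            MeasurableSpace.comap (fun ω' => h (g (X ω'))) inferInstance]) ω := by
  classical
  set mG := MeasurableSpace.comap (fun ω => g (X ω)) inferInstance with hmG_def
  set mH := MeasurableSpace.comap (fun ω => h (g (X ω))) inferInstance with hmH_def
  have hmG : mG ≤ m0 := (hg.comp hX).comap_le
  have hmH : mH ≤ m0 := hσ.trans hmG
  set F : Ω → ℝ := fun ω => if Y ω = c (g (X ω)) then (1 : ℝ) else 0 with hF_def
  -- measurability of F
  have hcg : Measurable[m0] (fun ω => c (g (X ω))) := hcmeas.mono hmG le_rfl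
  have hFmeas : Measurable[m0] F := by
    have hset : MeasurableSet[m0] {ω | Y ω = c (g (X ω))} := by
      have : {ω | Y ω = c (g (X ω))} = ⋃ i : Fin k,
          (Y ⁻¹' {i}) ∩ ((fun ω => c (g (X ω))) ⁻¹' {i}) := by
        ext ω; simp [Set.mem_iUnion, eq_comm]
      rw [this]
      exact MeasurableSet.iUnion fun i =>
        (hY (measurableSet_singleton i)).inter (hcg (measurableSet_singleton i))
    exact Measurable.ite hset measurable_const measurable_const
  have hF01 : ∀ ω, F ω ∈ Set.Icc (0:ℝ) 1 := by
    intro ω; by_cases hω : Y ω = c (g (X ω)) <;> simp [hF_def, hω]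
  have hFint : Integrable F μ := by
    refine Integrable.mono' (integrable_const 1) hFmeas.aestronglyMeasurable ?_
    exact Filter.Eventually.of_forall fun ω => by
      rcases hF01 ω with ⟨h1, h2⟩; rw [Real.norm_eq_abs, abs_le]; constructor <;> linarith
  set Z := μ[F|mG] with hZ_def
  set W := μ[F|mH] with hW_def
  -- H basic facts
  have hHsm : StronglyMeasurable[mH] (fun ω => h (g (X ω))) := by
    rw [hmH_def]; exact (Measurable.of_comap_le le_rfl).stronglyMeasurable
  have hH01 : ∀ ω, h (g (X ω)) ∈ Set.Icc (0:ℝ) 1 := by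
    intro ω
    obtain ⟨hnn, hsum⟩ := hgs (X ω)
    rw [hh]
    refine ⟨hnn _, ?_⟩
    calc g (X ω) (c (g (X ω))) ≤ ∑ i, g (X ω) i :=
          Finset.single_le_sum (fun i _ => hnn i) (Finset.mem_univ _)
      _ = 1 := hsum
  have hHint : Integrable (fun ω => h (g (X ω))) μ := by
    refine Integrable.mono' (integrable_const 1) ((hHsm.mono hmH).aestronglyMeasurable) ?_
    exact Filter.Eventually.of_forall fun ω => by
      rcases hH01 ω with ⟨h1, h2⟩; rw [Real.norm_eq_abs, abs_le]; constructor <;> linarith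
  -- a.e. bounds on Z and W
  have hZ01 : ∀ᵐ ω ∂μ, Z ω ∈ Set.Icc (0:ℝ) 1 := by
    have h0 : (0:Ω → ℝ) ≤ᵐ[μ] Z :=
      condExp_nonneg (Filter.Eventually.of_forall fun ω => (hF01 ω).1)
    have h1 : Z ≤ᵐ[μ] μ[(fun _ => (1:ℝ))|mG] :=
      condExp_mono hFint (integrable_const 1)
        (Filter.Eventually.of_forall fun ω => (hF01 ω).2)
    rw [condExp_const hmG] at h1
    filter_upwards [h0, h1] with ω ha hb
    exact ⟨ha, hb⟩
  have hW01 : ∀ᵐ ω ∂μ, W ω ∈ Set.Icc (0:ℝ) 1 := by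
    have h0 : (0:Ω → ℝ) ≤ᵐ[μ] W :=
      condExp_nonneg (Filter.Eventually.of_forall fun ω => (hF01 ω).1)
    have h1 : W ≤ᵐ[μ] μ[(fun _ => (1:ℝ))|mH] :=
      condExp_mono hFint (integrable_const 1)
        (Filter.Eventually.of_forall fun ω => (hF01 ω).2)
    rw [condExp_const hmH] at h1
    filter_upwards [h0, h1] with ω ha hb
    exact ⟨ha, hb⟩
  -- continuity and bounds of ϕ and Dϕ on [0,1]
  have hϕcont : Continuous ϕ := hϕC1.continuous
  have hDϕeq : Dϕ = deriv ϕ := funext fun y => ((hDϕ y).deriv).symm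
  have hDcont : Continuous Dϕ := by rw [hDϕeq]; exact hϕC1.continuous_deriv le_rfl
  obtain ⟨Cϕ, hCϕ⟩ := isCompact_Icc.exists_bound_of_continuousOn
    (s := Set.Icc (0:ℝ) 1) hϕcont.continuousOn
  obtain ⟨CD, hCD⟩ := isCompact_Icc.exists_bound_of_continuousOn
    (s := Set.Icc (0:ℝ) 1) hDcont.continuousOn
  -- m0-measurability
  have hZm : StronglyMeasurable[m0] Z := stronglyMeasurable_condExp.mono hmG
  have hWm : StronglyMeasurable[m0] W := stronglyMeasurable_condExp.mono hmH
  have hHm : StronglyMeasurable[m0] (fun ω => h (g (X ω))) := hHsm.mono hmH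
  -- integrability of the pieces
  have hφZint : Integrable (fun ω => ϕ (Z ω)) μ := by
    refine Integrable.mono' (integrable_const Cϕ)
      (hϕcont.comp_stronglyMeasurable hZm).aestronglyMeasurable ?_
    filter_upwards [hZ01] with ω hω
    exact hCϕ _ hω
  have hφWint : Integrable (fun ω => ϕ (W ω)) μ := by
    refine Integrable.mono' (integrable_const Cϕ)
      (hϕcont.comp_stronglyMeasurable hWm).aestronglyMeasurable ?_
    filter_upwards [hW01] with ω hω
    exact hCϕ _ hω
  have hφHint : Integrable (fun ω => ϕ (h (g (X ω)))) μ := by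
    refine Integrable.mono' (integrable_const Cϕ)
      (hϕcont.comp_stronglyMeasurable hHm).aestronglyMeasurable ?_
    exact Filter.Eventually.of_forall fun ω => hCϕ _ (hH01 ω)
  have habs2 : ∀ a b : ℝ, a ∈ Set.Icc (0:ℝ) 1 → b ∈ Set.Icc (0:ℝ) 1 → |a - b| ≤ 2 := by
    intro a b ⟨ha1, ha2⟩ ⟨hb1, hb2⟩
    rw [abs_le]; constructor <;> linarith
  have hDHZint : Integrable (fun ω => Dϕ (h (g (X ω))) * (Z ω - h (g (X ω)))) μ := by
    refine Integrable.mono' (integrable_const (CD * 2))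
      (((hDcont.comp_stronglyMeasurable hHm).mul (hZm.sub hHm)).aestronglyMeasurable) ?_
    filter_upwards [hZ01] with ω hω
    rw [Real.norm_eq_abs, abs_mul]
    have h1 : |Dϕ (h (g (X ω)))| ≤ CD := by
      have := hCD _ (hH01 ω); rwa [Real.norm_eq_abs] at this
    have h2 : |Z ω - h (g (X ω))| ≤ 2 := habs2 _ _ hω (hH01 ω)
    exact mul_le_mul h1 h2 (abs_nonneg _) ((abs_nonneg _).trans h1)
  have hDWZint : Integrable (fun ω => Dϕ (W ω) * (Z ω - W ω)) μ := by
    refine Integrable.mono' (integrable_const (CD * 2))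
      (((hDcont.comp_stronglyMeasurable hWm).mul (hZm.sub hWm)).aestronglyMeasurable) ?_
    filter_upwards [hZ01, hW01] with ω hω hω'
    rw [Real.norm_eq_abs, abs_mul]
    have h1 : |Dϕ (W ω)| ≤ CD := by
      have := hCD _ hω'; rwa [Real.norm_eq_abs] at this
    have h2 : |Z ω - W ω| ≤ 2 := habs2 _ _ hω hω'
    exact mul_le_mul h1 h2 (abs_nonneg _) ((abs_nonneg _).trans h1)
  have hsum1int : Integrable (fun ω => ϕ (W ω) + Dϕ (W ω) * (Z ω - W ω)) μ :=
    hφWint.add hDWZint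
  have hsum2int : Integrable (fun ω => ϕ (h (g (X ω))) +
      Dϕ (h (g (X ω))) * (Z ω - h (g (X ω)))) μ := hφHint.add hDHZint
  -- tower property : μ[Z|mH] =ᵐ W
  have htower : μ[Z|mH] =ᵐ[μ] W := condExp_condExp_of_le hσ hmG
  -- μ[W|mH] = W, μ[H|mH] = H
  have hWfix : μ[W|mH] = W :=
    condExp_of_stronglyMeasurable hmH stronglyMeasurable_condExp
      (show Integrable (μ[F|mH]) μ from integrable_condExp)
  have hHfix : μ[(fun ω => h (g (X ω)))|mH] = fun ω => h (g (X ω)) :=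
    condExp_of_stronglyMeasurable hmH hHsm hHint
  -- strongly measurable multipliers
  have hDWsm : StronglyMeasurable[mH] (fun ω => Dϕ (W ω)) :=
    hDcont.comp_stronglyMeasurable stronglyMeasurable_condExp
  have hDHsm : StronglyMeasurable[mH] (fun ω => Dϕ (h (g (X ω)))) :=
    hDcont.comp_stronglyMeasurable hHsm
  have hφWsm : StronglyMeasurable[mH] (fun ω => ϕ (W ω)) :=
    hϕcont.comp_stronglyMeasurable stronglyMeasurable_condExp
  have hφHsm : StronglyMeasurable[mH] (fun ω => ϕ (h (g (X ω)))) :=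
    hϕcont.comp_stronglyMeasurable hHsm
  have hDWbd : ∀ᵐ ω ∂μ, ‖Dϕ (W ω)‖ ≤ CD := by
    filter_upwards [hW01] with ω hω; exact hCD _ hω
  have hDHbd : ∀ᵐ ω ∂μ, ‖Dϕ (h (g (X ω)))‖ ≤ CD :=
    Filter.Eventually.of_forall fun ω => hCD _ (hH01 ω)
  -- μ[Z - W|mH] =ᵐ 0
  have hZWint : Integrable (fun ω => Z ω - W ω) μ :=
    (show Integrable (μ[F|mG]) μ from integrable_condExp).sub
      (show Integrable (μ[F|mH]) μ from integrable_condExp)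
  have hZW0 : μ[(fun ω => Z ω - W ω)|mH] =ᵐ[μ] fun _ => (0:ℝ) := by
    have h1 := condExp_sub (m := mH) (show Integrable (μ[F|mG]) μ from integrable_condExp)
      (show Integrable (μ[F|mH]) μ from integrable_condExp)
    refine h1.trans ?_
    filter_upwards [htower] with ω hω
    simp only [Pi.sub_apply]
    rw [hω, hWfix]
    simp
  -- μ[Z - H|mH] =ᵐ W - H
  have hZHint : Integrable (fun ω => Z ω - h (g (X ω))) μ :=
    (show Integrable (μ[F|mG]) μ from integrable_condExp).sub hHint
  have hZH : μ[(fun ω => Z ω - h (g (X ω)))|mH] =ᵐ[μ]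
      fun ω => W ω - h (g (X ω)) := by
    have h1 := condExp_sub (m := mH) (show Integrable (μ[F|mG]) μ from integrable_condExp) hHint
    refine h1.trans ?_
    filter_upwards [htower] with ω hω
    simp only [Pi.sub_apply]
    rw [hω, hHfix]
  -- Step A: Jensen: ϕ(W) ≤ᵐ μ[ϕ∘Z|mH]
  have hptwise : ∀ᵐ ω ∂μ, ϕ (W ω) + Dϕ (W ω) * (Z ω - W ω) ≤ ϕ (Z ω) := by
    filter_upwards [hZ01, hW01] with ω h1 h2
    exact grad_ineq hϕconv hDϕ h1 h2
  have hA := condExp_mono (m := mH) hsum1int hφZint hptwise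
  have hLHS : μ[(fun ω => ϕ (W ω) + Dϕ (W ω) * (Z ω - W ω))|mH] =ᵐ[μ]
      fun ω => ϕ (W ω) := by
    have h1 := condExp_add (m := mH) hφWint hDWZint
    refine h1.trans ?_
    have h2 : μ[(fun ω => ϕ (W ω))|mH] = fun ω => ϕ (W ω) :=
      condExp_of_stronglyMeasurable hmH hφWsm hφWint
    have h3 : μ[(fun ω => Dϕ (W ω)) * (fun ω => Z ω - W ω)|mH] =ᵐ[μ]
        (fun ω => Dϕ (W ω)) * μ[(fun ω => Z ω - W ω)|mH] :=
      condExp_stronglyMeasurable_mul_of_bound hmH hDWsm hZWint CD hDWbd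
    rw [h2]
    filter_upwards [h3, hZW0] with ω hω hω'
    have hω2 : (μ[(fun ω => Dϕ (W ω) * (Z ω - W ω))|mH]) ω
        = Dϕ (W ω) * (μ[(fun ω => Z ω - W ω)|mH]) ω := hω
    have hω3 : (μ[(fun ω => Z ω - W ω)|mH]) ω = 0 := hω'
    simp only [Pi.add_apply]
    rw [hω2, hω3]
    ring
  have hJensen : ∀ᵐ ω ∂μ, ϕ (W ω) ≤ (μ[(fun ω => ϕ (Z ω))|mH]) ω := by
    filter_upwards [hA, hLHS] with ω h1 h2
    rw [← h2]; exact h1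
  -- Step B: decompose the conditional expectation of the Bregman divergence
  have hBrw : (fun ω => dϕ (Z ω) (h (g (X ω)))) = fun ω =>
      ϕ (Z ω) - (ϕ (h (g (X ω))) + Dϕ (h (g (X ω))) * (Z ω - h (g (X ω)))) := by
    funext ω; rw [hdϕ]; ring
  have hinner : μ[(fun ω => ϕ (h (g (X ω))) +
        Dϕ (h (g (X ω))) * (Z ω - h (g (X ω))))|mH] =ᵐ[μ]
      fun ω => ϕ (h (g (X ω))) + Dϕ (h (g (X ω))) * (W ω - h (g (X ω))) := by
    have h1 := condExp_add (m := mH) hφHint hDHZint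
    refine h1.trans ?_
    have h2 : μ[(fun ω => ϕ (h (g (X ω))))|mH] = fun ω => ϕ (h (g (X ω))) :=
      condExp_of_stronglyMeasurable hmH hφHsm hφHint
    have h3 : μ[(fun ω => Dϕ (h (g (X ω)))) * (fun ω => Z ω - h (g (X ω)))|mH] =ᵐ[μ]
        (fun ω => Dϕ (h (g (X ω)))) * μ[(fun ω => Z ω - h (g (X ω)))|mH] :=
      condExp_stronglyMeasurable_mul_of_bound hmH hDHsm hZHint CD hDHbd
    rw [h2]
    filter_upwards [h3, hZH] with ω hω hω'
    have hω2 : (μ[(fun ω => Dϕ (h (g (X ω))) * (Z ω - h (g (X ω))))|mH]) ω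
        = Dϕ (h (g (X ω))) * (μ[(fun ω => Z ω - h (g (X ω)))|mH]) ω := hω
    simp only [Pi.add_apply]
    rw [hω2, hω']
  have hdϕint : Integrable (fun ω => dϕ (Z ω) (h (g (X ω)))) μ := by
    rw [hBrw]; exact hφZint.sub hsum2int
  have hB : μ[(fun ω => dϕ (Z ω) (h (g (X ω))))|mH] =ᵐ[μ]
      fun ω => (μ[(fun ω' => ϕ (Z ω'))|mH]) ω -
        (ϕ (h (g (X ω))) + Dϕ (h (g (X ω))) * (W ω - h (g (X ω)))) := by
    rw [hBrw]
    have h1 := condExp_sub (m := mH) hφZint hsum2int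
    refine h1.trans ?_
    filter_upwards [hinner] with ω hω
    simp only [Pi.sub_apply]
    rw [hω]
  -- conclude
  filter_upwards [hJensen, hB] with ω h1 h2
  rw [h2, hdϕ]
  linarith
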